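/- arXiv:1406.0641 — 8 statements merged into one kernel-verified Lean document; each statement's English description precedes it below -/
import Mathlib

section
/- For a rooted ST-structure that is closed under bounded unions, the structure is connected if and only if for any two ST-configurations (S,T) ⊆ (S',T') (componentwise inclusion) in the structure, there exists a path of single steps starting in (S,T) and ending in (S',T'). -/
/-- An ST-configuration over `E` is a pair of finite sets of events. -/
abbrev STConfig (E : Type*) := Finset E × Finset E

variable {E : Type*} [DecidableEq E]

/-- An ST-structure: every member `(S,T)` has `T ⊆ S`, and `(S,T) ∈ ST` implies `(S,S) ∈ ST`. -/
def IsSTStruct (ST : Set (STConfig E)) : Prop :=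
  (∀ c ∈ ST, c.2 ⊆ c.1) ∧ (∀ c ∈ ST, ((c.1, c.1) : STConfig E) ∈ ST)

/-- Rooted: contains `(∅,∅)`. -/
def STRooted (ST : Set (STConfig E)) : Prop := ((∅, ∅) : STConfig E) ∈ ST

/-- Connected. -/
def STConnected (ST : Set (STConfig E)) : Prop :=
  ∀ c ∈ ST, c ≠ ((∅, ∅) : STConfig E) →
    (∃ e ∈ c.1, ((c.1.erase e, c.2) : STConfig E) ∈ ST) ∨
    (∃ e ∈ c.2, ((c.1, c.2.erase e) : STConfig E) ∈ ST)

/-- Closed under bounded unions. -/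
def STClosedBUnion (ST : Set (STConfig E)) : Prop :=
  ∀ c ∈ ST, ∀ c' ∈ ST, ∀ c'' ∈ ST,
    c.1 ∪ c'.1 ⊆ c''.1 → c.2 ∪ c'.2 ⊆ c''.2 →
      ((c.1 ∪ c'.1, c.2 ∪ c'.2) : STConfig E) ∈ ST

/-- A single step: an s-step or a t-step. -/
def STStep (ST : Set (STConfig E)) (c c' : STConfig E) : Prop :=
  c ∈ ST ∧ c' ∈ ST ∧
  ((c'.2 = c.2 ∧ ∃ e, e ∉ c.1 ∧ c'.1 = insert e c.1) ∨
   (c'.1 = c.1 ∧ ∃ e, e ∈ c.1 ∧ e ∉ c.2 ∧ c'.2 = insert e c.2))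

lemma chain_to {ST : Set (STConfig E)} (hST : IsSTStruct ST) (hconn : STConnected ST) :
    ∀ n (c' : STConfig E), c' ∈ ST → c'.1.card + c'.2.card = n →
      Relation.ReflTransGen (fun a b => STStep ST a b ∧ b.1 ⊆ c'.1 ∧ b.2 ⊆ c'.2)
        ((∅, ∅) : STConfig E) c' := by
  intro n
  induction n using Nat.strong_induction_on with
  | _ n ih =>
    intro c' hc' hcard
    by_cases h0 : c' = ((∅, ∅) : STConfig E)
    · subst h0; exact .refl
    · rcases hconn c' hc' h0 with ⟨e, he, hmem⟩ | ⟨e, he, hmem⟩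
      · set b : STConfig E := (c'.1.erase e, c'.2) with hb
        have hbcard : b.1.card + b.2.card < n := by
          simp only [hb, Finset.card_erase_of_mem he]
          have : 0 < c'.1.card := Finset.card_pos.mpr ⟨e, he⟩
          omega
        have hchain := ih _ hbcard b hmem rfl
        have hchain' : Relation.ReflTransGen
            (fun a b' => STStep ST a b' ∧ b'.1 ⊆ c'.1 ∧ b'.2 ⊆ c'.2) ((∅, ∅) : STConfig E) b :=
          Relation.ReflTransGen.mono (fun a b' ⟨h1, h2, h3⟩ =>
            ⟨h1, h2.trans (Finset.erase_subset _ _), h3⟩) _ _ hchain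
        refine hchain'.tail ⟨⟨hmem, hc', Or.inl ?_⟩, subset_rfl, subset_rfl⟩
        exact ⟨rfl, e, Finset.notMem_erase _ _, (Finset.insert_erase he).symm⟩
      · set b : STConfig E := (c'.1, c'.2.erase e) with hb
        have hbcard : b.1.card + b.2.card < n := by
          simp only [hb, Finset.card_erase_of_mem he]
          have : 0 < c'.2.card := Finset.card_pos.mpr ⟨e, he⟩
          omega
        have hchain := ih _ hbcard b hmem rfl
        have hchain' : Relation.ReflTransGen
            (fun a b' => STStep ST a b' ∧ b'.1 ⊆ c'.1 ∧ b'.2 ⊆ c'.2) ((∅, ∅) : STConfig E) b :=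
          Relation.ReflTransGen.mono (fun a b' ⟨h1, h2, h3⟩ =>
            ⟨h1, h2, h3.trans (Finset.erase_subset _ _)⟩) _ _ hchain
        have heS : e ∈ c'.1 := hST.1 c' hc' he
        refine hchain'.tail ⟨⟨hmem, hc', Or.inr ?_⟩, subset_rfl, subset_rfl⟩
        exact ⟨rfl, e, heS, Finset.notMem_erase _ _, (Finset.insert_erase he).symm⟩

lemma lift_chain {ST : Set (STConfig E)} (hbu : STClosedBUnion ST)
    {c c' : STConfig E} (hc : c ∈ ST) (hc' : c' ∈ ST)
    (h1 : c.1 ⊆ c'.1) (h2 : c.2 ⊆ c'.2) {b : STConfig E}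
    (h : Relation.ReflTransGen (fun a b' => STStep ST a b' ∧ b'.1 ⊆ c'.1 ∧ b'.2 ⊆ c'.2)
      ((∅, ∅) : STConfig E) b) :
    ((c.1 ∪ b.1, c.2 ∪ b.2) : STConfig E) ∈ ST ∧
      Relation.ReflTransGen (STStep ST) c (c.1 ∪ b.1, c.2 ∪ b.2) := by
  induction h with
  | refl =>
    simp only [Finset.union_empty]
    exact ⟨hc, .refl⟩
  | tail hab hstep ih =>
    rename_i mid b
    obtain ⟨⟨hmid, hbmem, hshape⟩, hb1, hb2⟩ := hstep
    have humem : ((c.1 ∪ b.1, c.2 ∪ b.2) : STConfig E) ∈ ST :=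
      hbu c hc b hbmem c' hc' (Finset.union_subset h1 hb1) (Finset.union_subset h2 hb2)
    refine ⟨humem, ?_⟩
    rcases hshape with ⟨hT, e, heN, hS⟩ | ⟨hS, e, heS, heT, hT⟩
    · by_cases hec : e ∈ c.1
      · have : ((c.1 ∪ b.1, c.2 ∪ b.2) : STConfig E) = (c.1 ∪ mid.1, c.2 ∪ mid.2) := by
          rw [hS, hT, Finset.union_insert, Finset.insert_eq_of_mem (Finset.mem_union_left _ hec)]
        rw [this]; exact ih.2
      · refine ih.2.tail ⟨ih.1, humem, Or.inl ⟨by rw [hT], e, ?_, ?_⟩⟩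
        · simp [hec, heN]
        · rw [hS, Finset.union_insert]
    · by_cases hec : e ∈ c.2
      · have : ((c.1 ∪ b.1, c.2 ∪ b.2) : STConfig E) = (c.1 ∪ mid.1, c.2 ∪ mid.2) := by
          rw [hS, hT, Finset.union_insert, Finset.insert_eq_of_mem (Finset.mem_union_left _ hec)]
        rw [this]; exact ih.2
      · refine ih.2.tail ⟨ih.1, humem, Or.inr ⟨by rw [hS], e, ?_, ?_, ?_⟩⟩
        · exact Finset.mem_union_right _ heS
        · simp [hec, heT]
        · rw [hT, Finset.union_insert]

/-- a rooted ST-structure closed under bounded unions is connected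
iff for any two configurations included componentwise in one another there is a
path of single steps from the smaller to the larger. -/
theorem connected_iff_paths_between (ST : Set (STConfig E))
    (hST : IsSTStruct ST) (hroot : STRooted ST) (hbu : STClosedBUnion ST) :
    STConnected ST ↔
      ∀ c ∈ ST, ∀ c' ∈ ST, c.1 ⊆ c'.1 → c.2 ⊆ c'.2 →
        Relation.ReflTransGen (STStep ST) c c' := by
  constructor
  · intro hconn c hc c' hc' h1 h2
    have hchain := chain_to hST hconn _ c' hc' rfl
    have := lift_chain hbu hc hc' h1 h2 hchain
    have heq : ((c.1 ∪ c'.1, c.2 ∪ c'.2) : STConfig E) = c' := by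
      rw [Finset.union_eq_right.mpr h1, Finset.union_eq_right.mpr h2]
    rw [heq] at this
    exact this.2
  · intro hpath c hc hne
    have h := hpath _ hroot c hc (Finset.empty_subset _) (Finset.empty_subset _)
    rcases h.cases_tail with h0 | ⟨b, _, hstep⟩
    · exact absurd h0 hne
    · obtain ⟨hbmem, -, ⟨hT, e, heN, hS⟩ | ⟨hS, e, heS, heT, hT⟩⟩ := hstep
      · left
        refine ⟨e, by rw [hS]; exact Finset.mem_insert_self _ _, ?_⟩
        have : c.1.erase e = b.1 := by
          rw [hS, Finset.erase_insert heN]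
        rw [this, hT]
        exact hbmem
      · right
        refine ⟨e, by rw [hT]; exact Finset.mem_insert_self _ _, ?_⟩
        have : c.2.erase e = b.2 := by
          rw [hT, Finset.erase_insert heT]
        rw [this, hS]
        exact hbmem
end

section
/- Let ST be a stable ST-structure (rooted, connected, closed under bounded unions and bounded intersections). For any (S,T) ∈ ST and events e, e' ∈ S: if neither e ≺ e' nor e' ≺ e (causality in (S,T)), then e ∥ e' (concurrency in (S,T)). -/
variable {E : Type*} [DecidableEq E]

/-- Closed under bounded intersections. -/
def STClosedBInter (ST : Set (STConfig E)) : Prop :=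
  ∀ c ∈ ST, ∀ c' ∈ ST, ∀ c'' ∈ ST,
    c.1 ∪ c'.1 ⊆ c''.1 → c.2 ∪ c'.2 ⊆ c''.2 →
      ((c.1 ∩ c'.1, c.2 ∩ c'.2) : STConfig E) ∈ ST

/-- Concurrency in a configuration `c`. -/
def STConcur (ST : Set (STConfig E)) (c : STConfig E) (e e' : E) : Prop :=
  ∃ d ∈ ST, d.1 ⊆ c.1 ∧ d.2 ⊆ c.2 ∧ e ∈ d.1 ∧ e ∉ d.2 ∧ e' ∈ d.1 ∧ e' ∉ d.2

/-- Causality in a configuration `c`. -/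
def STCauses (ST : Set (STConfig E)) (c : STConfig E) (e e' : E) : Prop :=
  e ≠ e' ∧ ∀ d ∈ ST, d.1 ⊆ c.1 → d.2 ⊆ c.2 → e' ∈ d.1 → e ∈ d.2

/-- Auxiliary: in a rooted connected ST-structure, every started event of a
configuration is started-but-not-terminated in some sub-configuration. -/
theorem exists_started_not_terminated (ST : Set (STConfig E)) (hST : IsSTStruct ST)
    (hconn : STConnected ST) :
    ∀ n (u : STConfig E), u ∈ ST → u.1.card + u.2.card ≤ n → ∀ f ∈ u.1,
      ∃ v ∈ ST, v.1 ⊆ u.1 ∧ v.2 ⊆ u.2 ∧ f ∈ v.1 ∧ f ∉ v.2 := by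
  intro n
  induction n with
  | zero =>
    intro u hu hcard f hf
    have : u.1.card = 0 := by omega
    simp [Finset.card_eq_zero] at this
    simp [this] at hf
  | succ n ih =>
    intro u hu hcard f hf
    by_cases hft : f ∈ u.2
    · have hne : u ≠ ((∅, ∅) : STConfig E) := by
        intro h
        rw [h] at hf
        simp at hf
      rcases hconn u hu hne with ⟨x, hx, hx'⟩ | ⟨x, hx, hx'⟩
      · -- removed x from first component
        have hfx : f ∈ u.1.erase x := hST.1 _ hx' hft
        have hcard' : (u.1.erase x).card + u.2.card ≤ n := by
          have := Finset.card_erase_of_mem hx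
          have hpos : 0 < u.1.card := Finset.card_pos.2 ⟨x, hx⟩
          omega
        obtain ⟨v, hv, h1, h2, h3, h4⟩ := ih _ hx' hcard' f hfx
        exact ⟨v, hv, h1.trans (Finset.erase_subset _ _), h2, h3, h4⟩
      · by_cases hxf : x = f
        · subst hxf
          exact ⟨(u.1, u.2.erase x), hx', Finset.Subset.refl _,
            Finset.erase_subset _ _, hf, Finset.notMem_erase _ _⟩
        · have hcard' : u.1.card + (u.2.erase x).card ≤ n := by
            have := Finset.card_erase_of_mem hx
            have hpos : 0 < u.2.card := Finset.card_pos.2 ⟨x, hx⟩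
            omega
          obtain ⟨v, hv, h1, h2, h3, h4⟩ := ih _ hx' hcard' f hf
          exact ⟨v, hv, h1, h2.trans (Finset.erase_subset _ _), h3, h4⟩
    · exact ⟨u, hu, Finset.Subset.refl _, Finset.Subset.refl _, hf, hft⟩

/-- in a stable ST-structure (rooted, connected, closed under
bounded unions and intersections), if neither `e ≺ e'` nor `e' ≺ e` then `e ∥ e'`. -/
theorem stable_not_causes_imp_concur (ST : Set (STConfig E)) (hST : IsSTStruct ST)
    (hroot : STRooted ST) (hconn : STConnected ST)
    (hbu : STClosedBUnion ST) (hbi : STClosedBInter ST)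
    (c : STConfig E) (hc : c ∈ ST) (e e' : E) (he : e ∈ c.1) (he' : e' ∈ c.1)
    (h1 : ¬ STCauses ST c e e') (h2 : ¬ STCauses ST c e' e) :
    STConcur ST c e e' := by
  obtain ⟨w, hw, hw1, hw2, hw3, hw4⟩ :=
    exists_started_not_terminated ST hST hconn (c.1.card + c.2.card) c hc le_rfl e he
  obtain ⟨w', hw', hw1', hw2', hw3', hw4'⟩ :=
    exists_started_not_terminated ST hST hconn (c.1.card + c.2.card) c hc le_rfl e' he'
  by_cases heq : e = e'
  · subst heq
    exact ⟨w, hw, hw1, hw2, hw3, hw4, hw3, hw4⟩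
  · -- get witnesses from non-causality
    rw [STCauses, not_and] at h1 h2
    push_neg at h1 h2
    obtain ⟨A, hA, hA1, hA2, hA3, hA4⟩ := h1 heq
    obtain ⟨B, hB, hB1, hB2, hB3, hB4⟩ := h2 (Ne.symm heq)
    -- A ⊆ c, e' ∈ A.1, e ∉ A.2 ; B ⊆ c, e ∈ B.1, e' ∉ B.2
    -- A' = A ∪ w : e, e' ∈ A'.1, e ∉ A'.2
    have hA' := hbu A hA w hw c hc (Finset.union_subset hA1 hw1)
      (Finset.union_subset hA2 hw2)
    have hB' := hbu B hB w' hw' c hc (Finset.union_subset hB1 hw1')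
      (Finset.union_subset hB2 hw2')
    -- D = A' ∩ B'
    have hD := hbi _ hA' _ hB' c hc
      (by
        simp only []
        exact Finset.union_subset (Finset.union_subset hA1 hw1)
          (Finset.union_subset hB1 hw1'))
      (by
        exact Finset.union_subset (Finset.union_subset hA2 hw2)
          (Finset.union_subset hB2 hw2'))
    refine ⟨_, hD, ?_, ?_, ?_, ?_, ?_, ?_⟩
    · exact (Finset.inter_subset_left).trans (Finset.union_subset hA1 hw1)
    · exact (Finset.inter_subset_left).trans (Finset.union_subset hA2 hw2)
    · exact Finset.mem_inter.2 ⟨Finset.mem_union_right _ hw3, Finset.mem_union_left _ hB3⟩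
    · simp only [Finset.mem_inter, Finset.mem_union]
      rintro ⟨h, -⟩
      rcases h with h | h
      · exact hA4 h
      · exact hw4 h
    · exact Finset.mem_inter.2 ⟨Finset.mem_union_left _ hA3, Finset.mem_union_right _ hw3'⟩
    · simp only [Finset.mem_inter, Finset.mem_union]
      rintro ⟨-, h⟩
      rcases h with h | h
      · exact hB4 h
      · exact hw4' h
end

section
/- For an ST-configuration (S,T) of an ST-structure ST that is rooted and connected, the causality relation ≺ on S extended with equality (e ⪯ e' iff e ≺ e' or e = e') is a partial order (reflexive, transitive, and antisymmetric). -/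
variable {E : Type*} [DecidableEq E]

/-- Causality extended with equality: `e ⪯ e'`. -/
def STCausesEq (ST : Set (STConfig E)) (c : STConfig E) (e e' : E) : Prop :=
  STCauses ST c e e' ∨ e = e'

lemma stcauses_aux (ST : Set (STConfig E)) (hST : IsSTStruct ST)
    (hconn : STConnected ST) (c : STConfig E) {e₁ e₂ : E}
    (h12 : STCauses ST c e₁ e₂) (h21 : STCauses ST c e₂ e₁) :
    ∀ n (d : STConfig E), d.1.card + d.2.card ≤ n → d ∈ ST →
      d.1 ⊆ c.1 → d.2 ⊆ c.2 → e₁ ∉ d.1 := by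
  intro n
  induction n with
  | zero =>
    intro d hcard _ _ _ he₁
    have : d.1.card ≠ 0 := Finset.card_ne_zero_of_mem he₁
    omega
  | succ n ih =>
    intro d hcard hd hd1 hd2 he₁
    have he₂T : e₂ ∈ d.2 := h21.2 d hd hd1 hd2 he₁
    have he₂S : e₂ ∈ d.1 := hST.1 d hd he₂T
    have he₁T : e₁ ∈ d.2 := h12.2 d hd hd1 hd2 he₂S
    have hne : d ≠ ((∅, ∅) : STConfig E) := by
      intro h
      rw [h] at he₁
      simp at he₁
    rcases hconn d hd hne with ⟨e, heS, hd'⟩ | ⟨e, heT, hd'⟩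
    · have heT : e ∉ d.2 := by
        intro heT
        have := hST.1 _ hd' heT
        simp at this
      have hne₁ : e ≠ e₁ := fun h => heT (h ▸ he₁T)
      refine ih ((d.1.erase e, d.2) : STConfig E) ?_ hd'
        (Finset.Subset.trans (Finset.erase_subset _ _) hd1) hd2
        (Finset.mem_erase.mpr ⟨hne₁.symm, he₁⟩)
      have h1 := Finset.card_erase_of_mem heS
      have h2 : 0 < d.1.card := Finset.card_pos.mpr ⟨e, heS⟩
      simp only [h1]
      omega
    · refine ih ((d.1, d.2.erase e) : STConfig E) ?_ hd' hd1
        (Finset.Subset.trans (Finset.erase_subset _ _) hd2) he₁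
      have h1 := Finset.card_erase_of_mem heT
      have h2 : 0 < d.2.card := Finset.card_pos.mpr ⟨e, heT⟩
      simp only [h1]
      omega

/-- for `(S,T)` in a rooted and connected ST-structure, the causality
relation extended with equality is a partial order on the events of `S`:
reflexive, transitive and antisymmetric. -/
theorem causesEq_partialOrder (ST : Set (STConfig E)) (hST : IsSTStruct ST)
    (hroot : STRooted ST) (hconn : STConnected ST)
    (c : STConfig E) (hc : c ∈ ST) :
    (∀ e ∈ c.1, STCausesEq ST c e e) ∧
    (∀ e₁ ∈ c.1, ∀ e₂ ∈ c.1, ∀ e₃ ∈ c.1,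
      STCausesEq ST c e₁ e₂ → STCausesEq ST c e₂ e₃ → STCausesEq ST c e₁ e₃) ∧
    (∀ e₁ ∈ c.1, ∀ e₂ ∈ c.1,
      STCausesEq ST c e₁ e₂ → STCausesEq ST c e₂ e₁ → e₁ = e₂) := by
  have antisym : ∀ e₁ ∈ c.1, ∀ e₂, STCauses ST c e₁ e₂ → STCauses ST c e₂ e₁ → False := by
    intro e₁ he₁ e₂ h12 h21
    exact stcauses_aux ST hST hconn c h12 h21 (c.1.card + c.2.card) c le_rfl hc
      (subset_refl _) (subset_refl _) he₁
  refine ⟨fun e _ => Or.inr rfl, ?_, ?_⟩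
  · intro e₁ he₁ e₂ _ e₃ _ h12 h23
    rcases h12 with h12 | rfl
    · rcases h23 with h23 | rfl
      · by_cases h13 : e₁ = e₃
        · subst h13
          exact absurd (antisym e₁ he₁ e₂ h12 h23) (fun h => h)
        · exact Or.inl ⟨h13, fun d hd hd1 hd2 he₃ =>
            h12.2 d hd hd1 hd2 (hST.1 d hd (h23.2 d hd hd1 hd2 he₃))⟩
      · exact Or.inl h12
    · exact h23
  · intro e₁ he₁ e₂ _ h12 h21
    rcases h12 with h12 | h
    · rcases h21 with h21 | h
      · exact absurd (antisym e₁ he₁ e₂ h12 h21) (fun h => h)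
      · exact h.symm
    · exact h
end

section
/- A rooted and connected ST-structure is closed under single events if and only if it is adjacent-closed. -/
variable {E : Type*} [DecidableEq E]

/-- Closed under single events: for every `(S,T) ∈ ST` and `e ∈ S \ T`,
both `(S, T∪{e})` and `(S\{e}, T)` are in `ST`. -/
def STClosedSingle (ST : Set (STConfig E)) : Prop :=
  ∀ c ∈ ST, ∀ e ∈ c.1, e ∉ c.2 →
    ((c.1, insert e c.2) : STConfig E) ∈ ST ∧
    ((c.1.erase e, c.2) : STConfig E) ∈ ST

/-- Adjacent-closure: the four closure conditions. -/
def STAdjClosed (ST : Set (STConfig E)) : Prop :=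
  (∀ (S T : Finset E) (e e' : E), e ≠ e' → e ∉ S → e' ∉ S →
    ((S, T) : STConfig E) ∈ ST → ((insert e S, T) : STConfig E) ∈ ST →
    ((insert e' (insert e S), T) : STConfig E) ∈ ST →
    ((insert e' S, T) : STConfig E) ∈ ST) ∧
  (∀ (S T : Finset E) (e e' : E), e ∉ S → e' ∉ T → e ≠ e' →
    ((S, T) : STConfig E) ∈ ST → ((insert e S, T) : STConfig E) ∈ ST →
    ((insert e S, insert e' T) : STConfig E) ∈ ST →
    ((S, insert e' T) : STConfig E) ∈ ST) ∧
  (∀ (S T : Finset E) (e e' : E), e ∉ S → e' ∉ T → e ≠ e' →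
    ((S, T) : STConfig E) ∈ ST → ((insert e S, T) : STConfig E) ∈ ST →
    ((S, insert e' T) : STConfig E) ∈ ST →
    ((insert e S, insert e' T) : STConfig E) ∈ ST) ∧
  (∀ (S T : Finset E) (e e' : E), e ≠ e' → e ∉ T → e' ∉ T →
    ((S, T) : STConfig E) ∈ ST → ((S, insert e T) : STConfig E) ∈ ST →
    ((S, insert e' (insert e T)) : STConfig E) ∈ ST →
    ((S, insert e' T) : STConfig E) ∈ ST)

/-- a rooted and connected ST-structure is closed under single
events iff it is adjacent-closed. -/
theorem closedSingle_iff_adjClosed (ST : Set (STConfig E)) (hST : IsSTStruct ST)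
    (hroot : STRooted ST) (hconn : STConnected ST) :
    STClosedSingle ST ↔ STAdjClosed ST := by
  obtain ⟨hsub, hself⟩ := hST
  constructor
  · intro h
    refine ⟨?_, ?_, ?_, ?_⟩
    · intro S T e e' hee' heS he'S hST1 hST2 hST3
      have heT : e ∉ T := fun heT => heS (hsub _ hST1 heT)
      have := (h _ hST3 e (by simp) heT).2
      have heq : (insert e' (insert e S)).erase e = insert e' S := by
        ext x; simp only [Finset.mem_erase, Finset.mem_insert]
        by_cases hx : x = e <;> by_cases hx' : x = e' <;> simp_all
      rwa [heq] at this
    · intro S T e e' heS he'T hee' hST1 hST2 hST3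
      have heT : e ∉ T := fun heT => heS (hsub _ hST1 heT)
      have heT' : e ∉ insert e' T := by simp [hee', heT]
      have := (h _ hST3 e (by simp) heT').2
      rwa [Finset.erase_insert heS] at this
    · intro S T e e' heS he'T hee' hST1 hST2 hST3
      have he'S : e' ∈ S := hsub _ hST3 (by simp)
      have := (h _ hST2 e' (by simp [he'S]) he'T).1
      exact this
    · intro S T e e' hee' heT he'T hST1 hST2 hST3
      have he'S : e' ∈ S := hsub _ hST3 (by simp)
      exact (h _ hST1 e' he'S he'T).1
  · rintro ⟨h1, h2, h3, h4⟩
    -- Claim 1: removal from S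
    have claim1 : ∀ n (S T : Finset E), S.card + T.card = n →
        ((S, T) : STConfig E) ∈ ST → ∀ e ∈ S, e ∉ T →
        ((S.erase e, T) : STConfig E) ∈ ST := by
      intro n
      induction n using Nat.strong_induction_on with
      | _ n ih =>
        intro S T hn hmem e he heT
        have hne : ((S, T) : STConfig E) ≠ ((∅, ∅) : STConfig E) := by
          intro h0
          have : S = ∅ := congrArg Prod.fst h0
          subst this; simp at he
        rcases hconn _ hmem hne with ⟨f, hf, hf'⟩ | ⟨f, hf, hf'⟩
        · by_cases hef : f = e
          · subst hef; exact hf'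
          · have hcard : (S.erase f).card + T.card < n := by
              have h1' := Finset.card_erase_of_mem (show f ∈ S from hf)
              have h2' := Finset.card_pos.mpr ⟨f, show f ∈ S from hf⟩
              omega
            have heSf : e ∈ S.erase f := Finset.mem_erase.mpr ⟨fun h0 => hef h0.symm, he⟩
            have h0 : (((S.erase f).erase e, T) : STConfig E) ∈ ST :=
              ih _ hcard _ _ rfl hf' e heSf heT
            have key := h1 ((S.erase f).erase e) T e f
              (fun h0 => hef h0.symm) (Finset.notMem_erase e _)
              (by simp [Finset.mem_erase]) h0
              (by rwa [Finset.insert_erase heSf])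
              (by rw [Finset.insert_erase heSf, Finset.insert_erase hf]; exact hmem)
            have heq : insert f ((S.erase f).erase e) = S.erase e := by
              rw [Finset.erase_right_comm, Finset.insert_erase
                (Finset.mem_erase.mpr ⟨hef, hf⟩)]
            rwa [heq] at key
        · have hfe : e ≠ f := fun h0 => heT (h0 ▸ hf)
          have hcard : S.card + (T.erase f).card < n := by
            have h1' := Finset.card_erase_of_mem (show f ∈ T from hf)
            have h2' := Finset.card_pos.mpr ⟨f, show f ∈ T from hf⟩
            omega
          have heTf : e ∉ T.erase f := fun h0 => heT (Finset.mem_of_mem_erase h0)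
          have h0 : ((S.erase e, T.erase f) : STConfig E) ∈ ST :=
            ih _ hcard _ _ rfl hf' e he heTf
          have key := h2 (S.erase e) (T.erase f) e f
            (Finset.notMem_erase e S) (Finset.notMem_erase f T) hfe h0
            (by rwa [Finset.insert_erase he])
            (by rw [Finset.insert_erase he, Finset.insert_erase hf]; exact hmem)
          rwa [Finset.insert_erase hf] at key
    -- Claim 2: addition to T
    have claim2 : ∀ n (S T : Finset E), S.card = n →
        ((S, T) : STConfig E) ∈ ST → ∀ e ∈ S, e ∉ T →
        ((S, insert e T) : STConfig E) ∈ ST := by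
      intro n
      induction n using Nat.strong_induction_on with
      | _ n ih =>
        intro S T hn hmem e he heT
        by_cases hfull : S = insert e T
        · have hS : ((S, S) : STConfig E) ∈ ST := hself _ hmem
          rw [hfull] at hS ⊢
          exact hS
        · have hTS : T ⊆ S := hsub _ hmem
          have hsub' : insert e T ⊆ S := Finset.insert_subset he hTS
          obtain ⟨g, hgS, hgT⟩ : ∃ g ∈ S, g ∉ insert e T := by
            by_contra hcon
            push_neg at hcon
            exact hfull (Finset.Subset.antisymm hcon hsub')
          have hge : g ≠ e := fun h0 => hgT (by simp [h0])
          have hgT' : g ∉ T := fun h0 => hgT (Finset.mem_insert_of_mem h0)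
          have hrem : ((S.erase g, T) : STConfig E) ∈ ST :=
            claim1 _ S T rfl hmem g hgS hgT'
          have hcard : (S.erase g).card < n := by
            rw [← hn]; exact Finset.card_erase_lt_of_mem hgS
          have heSg : e ∈ S.erase g := Finset.mem_erase.mpr ⟨fun h0 => hge h0.symm, he⟩
          have hadd : ((S.erase g, insert e T) : STConfig E) ∈ ST :=
            ih _ hcard _ _ rfl hrem e heSg heT
          have key := h3 (S.erase g) T g e (Finset.notMem_erase g S) heT hge hrem
            (by rwa [Finset.insert_erase hgS]) hadd
          rwa [Finset.insert_erase hgS] at key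
    intro c hc e he heT
    obtain ⟨S, T⟩ := c
    exact ⟨claim2 S.card S T rfl hc e he heT, claim1 _ S T rfl hc e he heT⟩
end

section
/- If an ST-structure ST is rooted, connected, closed under bounded unions, or closed under bounded intersections, then the configuration structure ST2C(ST) = {T : (T,T) ∈ ST} is respectively rooted, connected, closed under bounded unions, or closed under bounded intersections. -/
variable {E : Type*} [DecidableEq E]

/-- The configuration structure extracted from an ST-structure. -/
def ST2C (ST : Set (STConfig E)) : Set (Finset E) := {T | ((T, T) : STConfig E) ∈ ST}

def CRooted (C : Set (Finset E)) : Prop := ∅ ∈ C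

def CConnected (C : Set (Finset E)) : Prop :=
  ∀ X ∈ C, X ≠ ∅ → ∃ e ∈ X, X.erase e ∈ C

def CClosedBUnion (C : Set (Finset E)) : Prop :=
  ∀ X ∈ C, ∀ Y ∈ C, ∀ Z ∈ C, X ∪ Y ⊆ Z → X ∪ Y ∈ C

def CClosedBInter (C : Set (Finset E)) : Prop :=
  ∀ X ∈ C, ∀ Y ∈ C, ∀ Z ∈ C, X ∪ Y ⊆ Z → X ∩ Y ∈ C

/-- if an ST-structure is rooted, connected, closed under bounded
unions, or closed under bounded intersections, then so is the configuration
structure `ST2C ST`. -/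
theorem st2c_preserves_properties (ST : Set (STConfig E)) (hST : IsSTStruct ST) :
    (STRooted ST → CRooted (ST2C ST)) ∧
    (STConnected ST → CConnected (ST2C ST)) ∧
    (STClosedBUnion ST → CClosedBUnion (ST2C ST)) ∧
    (STClosedBInter ST → CClosedBInter (ST2C ST)) := by
  refine ⟨fun h => h, ?_, ?_, ?_⟩
  · intro hconn X hX hXne
    have key : ∀ T : Finset E, ((X, T) : STConfig E) ∈ ST →
        ∃ e ∈ X, ((X.erase e, X.erase e) : STConfig E) ∈ ST := by
      intro T
      induction T using Finset.strongInduction with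
      | _ T ih =>
        intro hT
        have hne : ((X, T) : STConfig E) ≠ ((∅, ∅) : STConfig E) := by
          intro h
          exact hXne (congrArg Prod.fst h)
        rcases hconn _ hT hne with ⟨e, he, h⟩ | ⟨e, he, h⟩
        · exact ⟨e, he, hST.2 _ h⟩
        · exact ih (T.erase e) (Finset.erase_ssubset he) h
    obtain ⟨e, he, h⟩ := key X hX
    exact ⟨e, he, h⟩
  · intro hU X hX Y hY Z hZ hsub
    exact hU _ hX _ hY _ hZ hsub hsub
  · intro hI X hX Y hY Z hZ hsub
    exact hI _ hX _ hY _ hZ hsub hsub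
end

section
/- For a configuration structure C, the ST-structure ST(C) obtained by adding (X,X) for each X ∈ C and (Y,X) for each asynchronous step X →step Y, simulates each asynchronous step by single steps: for every asynchronous step X →step Y in C there is a chain of single s- and t-steps in ST(C) from (X,X) to (Y,Y) passing through (Y,X). -/
variable {E : Type*} [DecidableEq E]

/-- Asynchronous concurrent step in a configuration structure. -/
def AsyncStep (C : Set (Finset E)) (X Y : Finset E) : Prop :=
  X ⊆ Y ∧ ∀ Z, X ⊆ Z → Z ⊆ Y → Z ∈ C

/-- The ST-structure generated from a configuration structure: `(X,X)` for
`X ∈ C` and `(Y,X)` for each asynchronous step `X →step Y`. -/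
def STofC (C : Set (Finset E)) : Set (STConfig E) :=
  {c | (c.1 = c.2 ∧ c.1 ∈ C) ∨ AsyncStep C c.2 c.1}

/-- every asynchronous step `X →step Y` of a configuration
structure is simulated in `STofC C` by a chain of single steps from `(X,X)`
to `(Y,Y)` passing through `(Y,X)`. -/
theorem stofc_simulates_asyncStep (C : Set (Finset E)) (X Y : Finset E)
    (h : AsyncStep C X Y) :
    Relation.ReflTransGen (STStep (STofC C)) ((X, X) : STConfig E) ((Y, X) : STConfig E) ∧
    Relation.ReflTransGen (STStep (STofC C)) ((Y, X) : STConfig E) ((Y, Y) : STConfig E) := by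
  obtain ⟨hXY, hC⟩ := h
  have mem1 : ∀ Z : Finset E, X ⊆ Z → Z ⊆ Y → ((Z, X) : STConfig E) ∈ STofC C := by
    intro Z h1 h2
    exact Or.inr ⟨h1, fun W hW hW' => hC W hW (hW'.trans h2)⟩
  have mem2 : ∀ Z : Finset E, X ⊆ Z → Z ⊆ Y → ((Y, Z) : STConfig E) ∈ STofC C := by
    intro Z h1 h2
    exact Or.inr ⟨h2, fun W hW hW' => hC W (h1.trans hW) hW'⟩
  constructor
  · -- s-steps from (X,X) to (Y,X)
    suffices H : ∀ n (Z : Finset E), X ⊆ Z → Z ⊆ Y → (Y \ Z).card = n →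
        Relation.ReflTransGen (STStep (STofC C)) ((Z, X) : STConfig E) ((Y, X)) from
      H _ X subset_rfl hXY rfl
    intro n
    induction n with
    | zero =>
      intro Z h1 h2 hc
      have : Z = Y := Finset.Subset.antisymm h2
        (fun a ha => by
          by_contra hna
          exact absurd (Finset.card_eq_zero.mp hc ▸ Finset.mem_sdiff.mpr ⟨ha, hna⟩)
            (Finset.notMem_empty a))
      rw [this]
    | succ n ih =>
      intro Z h1 h2 hc
      have hne : (Y \ Z).Nonempty := Finset.card_pos.mp (by omega)
      obtain ⟨e, he⟩ := hne
      obtain ⟨heY, heZ⟩ := Finset.mem_sdiff.mp he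
      have h2' : insert e Z ⊆ Y := Finset.insert_subset heY h2
      have hstep : STStep (STofC C) ((Z, X)) ((insert e Z, X)) :=
        ⟨mem1 Z h1 h2, mem1 _ (h1.trans (Finset.subset_insert e Z)) h2',
          Or.inl ⟨rfl, e, heZ, rfl⟩⟩
      refine Relation.ReflTransGen.head hstep (ih _ (h1.trans (Finset.subset_insert e Z)) h2' ?_)
      have : Y \ insert e Z = (Y \ Z).erase e := by
        ext a; simp only [Finset.mem_sdiff, Finset.mem_insert, Finset.mem_erase, not_or]; tauto
      rw [this, Finset.card_erase_of_mem he, hc]; omega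
  · -- t-steps from (Y,X) to (Y,Y)
    suffices H : ∀ n (Z : Finset E), X ⊆ Z → Z ⊆ Y → (Y \ Z).card = n →
        Relation.ReflTransGen (STStep (STofC C)) ((Y, Z) : STConfig E) ((Y, Y)) from
      H _ X subset_rfl hXY rfl
    intro n
    induction n with
    | zero =>
      intro Z h1 h2 hc
      have : Z = Y := Finset.Subset.antisymm h2
        (fun a ha => by
          by_contra hna
          exact absurd (Finset.card_eq_zero.mp hc ▸ Finset.mem_sdiff.mpr ⟨ha, hna⟩)
            (Finset.notMem_empty a))
      rw [this]
    | succ n ih =>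
      intro Z h1 h2 hc
      have hne : (Y \ Z).Nonempty := Finset.card_pos.mp (by omega)
      obtain ⟨e, he⟩ := hne
      obtain ⟨heY, heZ⟩ := Finset.mem_sdiff.mp he
      have h2' : insert e Z ⊆ Y := Finset.insert_subset heY h2
      have hstep : STStep (STofC C) ((Y, Z)) ((Y, insert e Z)) :=
        ⟨mem2 Z h1 h2, mem2 _ (h1.trans (Finset.subset_insert e Z)) h2',
          Or.inr ⟨rfl, e, heY, heZ, rfl⟩⟩
      refine Relation.ReflTransGen.head hstep (ih _ (h1.trans (Finset.subset_insert e Z)) h2' ?_)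
      have : Y \ insert e Z = (Y \ Z).erase e := by
        ext a; simp only [Finset.mem_sdiff, Finset.mem_insert, Finset.mem_erase, not_or]; tauto
      rw [this, Finset.card_erase_of_mem he, hc]; omega
end

section
/- The ST-structure ST(C) generated from a configuration structure C (by adding (X,X) for X ∈ C and (Y,X) for asynchronous steps X →step Y) is adjacent-closed. -/
variable {E : Type*} [DecidableEq E]

lemma mem_STofC_iff (C : Set (Finset E)) (S T : Finset E) :
    ((S, T) : STConfig E) ∈ STofC C ↔ AsyncStep C T S := by
  constructor
  · rintro (⟨h1, h2⟩ | h)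
    · simp only at h1 h2
      subst h1
      exact ⟨subset_rfl, fun Z hZ1 hZ2 => by rwa [Finset.Subset.antisymm hZ2 hZ1]⟩
    · exact h
  · exact Or.inr

/-- the ST-structure generated from a configuration structure is
adjacent-closed. -/
theorem stofc_adjClosed (C : Set (Finset E)) : STAdjClosed (STofC C) := by
  refine ⟨?_, ?_, ?_, ?_⟩
  · intro S T e e' _ _ _ h1 _ h3
    rw [mem_STofC_iff] at *
    refine ⟨h1.1.trans (Finset.subset_insert _ _), fun Z hZ1 hZ2 => h3.2 Z hZ1 ?_⟩
    exact hZ2.trans (Finset.insert_subset_insert _ (Finset.subset_insert _ _))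
  · intro S T e e' _ _ hne h1 _ h3
    rw [mem_STofC_iff] at *
    have he' : e' ∈ S := by
      have := h3.1 (Finset.mem_insert_self e' T)
      rcases Finset.mem_insert.mp this with h | h
      · exact absurd h.symm hne
      · exact h
    refine ⟨Finset.insert_subset he' h1.1, fun Z hZ1 hZ2 => h3.2 Z hZ1 ?_⟩
    exact hZ2.trans (Finset.subset_insert _ _)
  · intro S T e e' _ _ _ _ h2 h3
    rw [mem_STofC_iff] at *
    refine ⟨h3.1.trans (Finset.subset_insert _ _), fun Z hZ1 hZ2 => h2.2 Z ?_ hZ2⟩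
    exact (Finset.subset_insert _ _).trans hZ1
  · intro S T e e' _ _ _ h1 _ h3
    rw [mem_STofC_iff] at *
    have he' : e' ∈ S := h3.1 (Finset.mem_insert_self e' _)
    exact ⟨Finset.insert_subset he' h1.1,
      fun Z hZ1 hZ2 => h1.2 Z ((Finset.subset_insert _ _).trans hZ1) hZ2⟩
end

section
/- For an inpure event structure E, the ST-structure obtained by adding (X,X) for each left-closed configuration X ∈ L(E) and (Y,X) for each asynchronous step X →step Y, matches every asynchronous step X →step Y by a chain of single s- and t-steps from (X,X) to (Y,Y) passing through (Y,X). -/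
variable {E : Type*} [DecidableEq E]

/-- Asynchronous step relation of an (inpure) event structure. -/
def EvStep (en : Finset E → Finset E → Prop) (X Y : Finset E) : Prop :=
  X ⊆ Y ∧ ∀ Z, Z ⊆ Y → ∃ W, W ⊆ X ∧ en W Z

/-- Left-closed configurations of an inpure event structure. -/
def LConf (en : Finset E → Finset E → Prop) : Set (Finset E) :=
  {X | ∀ Y, Y ⊆ X → ∃ Z, Z ⊆ X ∧ en Z Y}

/-- The ST-structure generated from an inpure event structure: `(X,X)` for
each left-closed configuration `X` and `(Y,X)` for each asynchronous step. -/
def STofE (en : Finset E → Finset E → Prop) : Set (STConfig E) :=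
  {c | (c.1 = c.2 ∧ c.1 ∈ LConf en) ∨ EvStep en c.2 c.1}

/-- every asynchronous step `X →step Y` of an inpure event
structure is matched in the generated ST-structure by a chain of single steps
from `(X,X)` to `(Y,Y)` passing through `(Y,X)`. -/
theorem stofe_simulates_evStep (en : Finset E → Finset E → Prop)
    (X Y : Finset E) (h : EvStep en X Y) :
    Relation.ReflTransGen (STStep (STofE en)) ((X, X) : STConfig E) ((Y, X) : STConfig E) ∧
    Relation.ReflTransGen (STStep (STofE en)) ((Y, X) : STConfig E) ((Y, Y) : STConfig E) := by
  obtain ⟨hXY, hen⟩ := h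
  -- interpolation: any (S, X) and (Y, S) with X ⊆ S ⊆ Y is in the ST-structure
  have mem1 : ∀ S : Finset E, X ⊆ S → S ⊆ Y → ((S, X) : STConfig E) ∈ STofE en := by
    intro S hXS hSY
    exact Or.inr ⟨hXS, fun Z hZ => hen Z (hZ.trans hSY)⟩
  have mem2 : ∀ S : Finset E, X ⊆ S → S ⊆ Y → ((Y, S) : STConfig E) ∈ STofE en := by
    intro S hXS hSY
    exact Or.inr ⟨hSY, fun Z hZ => (hen Z hZ).imp fun W ⟨hW, hWZ⟩ => ⟨hW.trans hXS, hWZ⟩⟩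
  have chain1 : ∀ n (S : Finset E), X ⊆ S → S ⊆ Y → (S \ X).card = n →
      Relation.ReflTransGen (STStep (STofE en)) ((X, X) : STConfig E) ((S, X) : STConfig E) := by
    intro n
    induction n with
    | zero =>
      intro S hXS hSY hc
      have : S = X := Finset.Subset.antisymm
        (fun a ha => by
          by_contra hax
          exact absurd (Finset.card_eq_zero.mp hc ▸ Finset.mem_sdiff.mpr ⟨ha, hax⟩)
            (Finset.notMem_empty a))
        hXS
      subst this; exact Relation.ReflTransGen.refl
    | succ n ih =>
      intro S hXS hSY hc
      obtain ⟨e, he⟩ : (S \ X).Nonempty := Finset.card_pos.mp (by omega)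
      obtain ⟨heS, heX⟩ := Finset.mem_sdiff.mp he
      have hXS' : X ⊆ S.erase e := fun a ha =>
        Finset.mem_erase.mpr ⟨fun h' => heX (h' ▸ ha), hXS ha⟩
      have hS'Y : S.erase e ⊆ Y := (Finset.erase_subset _ _).trans hSY
      have hcard : (S.erase e \ X).card = n := by
        rw [Finset.erase_sdiff_comm, Finset.card_erase_of_mem he]; omega
      refine (ih (S.erase e) hXS' hS'Y hcard).tail ?_
      refine ⟨mem1 _ hXS' hS'Y, mem1 _ hXS hSY, Or.inl ⟨rfl, e, Finset.notMem_erase e S, ?_⟩⟩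
      simp [Finset.insert_erase heS]
  have chain2 : ∀ n (S : Finset E), X ⊆ S → S ⊆ Y → (Y \ S).card = n →
      Relation.ReflTransGen (STStep (STofE en)) ((Y, S) : STConfig E) ((Y, Y) : STConfig E) := by
    intro n
    induction n with
    | zero =>
      intro S hXS hSY hc
      have : Y = S := Finset.Subset.antisymm
        (fun a ha => by
          by_contra has
          exact absurd (Finset.card_eq_zero.mp hc ▸ Finset.mem_sdiff.mpr ⟨ha, has⟩)
            (Finset.notMem_empty a))
        hSY
      rw [this]
    | succ n ih =>
      intro S hXS hSY hc
      obtain ⟨e, he⟩ : (Y \ S).Nonempty := Finset.card_pos.mp (by omega)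
      obtain ⟨heY, heS⟩ := Finset.mem_sdiff.mp he
      have hXS' : X ⊆ insert e S := hXS.trans (Finset.subset_insert _ _)
      have hS'Y : insert e S ⊆ Y := Finset.insert_subset heY hSY
      have hcard : (Y \ insert e S).card = n := by
        rw [Finset.sdiff_insert, Finset.card_erase_of_mem he]; omega
      refine Relation.ReflTransGen.head ?_ (ih (insert e S) hXS' hS'Y hcard)
      exact ⟨mem2 _ hXS hSY, mem2 _ hXS' hS'Y, Or.inr ⟨rfl, e, heY, heS, rfl⟩⟩
  exact ⟨chain1 _ Y hXY (le_refl Y) rfl, chain2 _ X (Finset.Subset.refl X) hXY rfl⟩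
end
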